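/- For every infinite set of real numbers X: (1) X satisfies S₁(Ω,Γ) if and only if X satisfies both binom(T,Γ) and Sfin(Ω,T); (2) X satisfies S₁(B_Ω,B_Γ) if and only if X satisfies both binom(B_T,B_Γ) and Sfin(B_Ω,B_T). -/

import Mathlib

open Set

namespace TauCoverPaper

/-- `a ⊆* b`: `a \ b` is finite. -/
def AlmostSubset (a b : Set ℕ) : Prop := (a \ b).Finite

/-- `Y` is linearly quasiordered by `⊆*`. -/
def LinQuasi (Y : Set (Set ℕ)) : Prop :=
  ∀ a ∈ Y, ∀ b ∈ Y, AlmostSubset a b ∨ AlmostSubset b a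

/-- `a` is a pseudo-intersection of the family `Y`. -/
def PseudoIntersection (a : Set ℕ) (Y : Set (Set ℕ)) : Prop :=
  a.Infinite ∧ ∀ b ∈ Y, AlmostSubset a b

/-- `Y` is centered: every nonempty finite subfamily has infinite intersection. -/
def Centered (Y : Set (Set ℕ)) : Prop :=
  ∀ F : Set (Set ℕ), F ⊆ Y → F.Finite → F.Nonempty → (⋂₀ F).Infinite

/-- A tower: a family of infinite subsets of `ℕ`, linearly quasiordered by `⊆*`,
with no pseudo-intersection. -/
def IsTower (Y : Set (Set ℕ)) : Prop :=
  (∀ a ∈ Y, a.Infinite) ∧ LinQuasi Y ∧ ¬ ∃ a, PseudoIntersection a Y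

variable {α : Type}

/-- A cover of the space `α`: the union is everything, and the whole space is
not a member. -/
def IsCover (𝒰 : Set (Set α)) : Prop := ⋃₀ 𝒰 = univ ∧ univ ∉ 𝒰

/-- A large cover: each point belongs to infinitely many members. -/
def IsLargeCover (𝒰 : Set (Set α)) : Prop :=
  IsCover 𝒰 ∧ ∀ x : α, {U ∈ 𝒰 | x ∈ U}.Infinite

/-- An ω-cover: each finite set is contained in some member. -/
def IsOmegaCover (𝒰 : Set (Set α)) : Prop :=
  IsCover 𝒰 ∧ ∀ F : Set α, F.Finite → ∃ U ∈ 𝒰, F ⊆ U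

/-- A γ-cover: infinite, and each point belongs to all but finitely many members. -/
def IsGammaCover (𝒰 : Set (Set α)) : Prop :=
  IsCover 𝒰 ∧ 𝒰.Infinite ∧ ∀ x : α, {U ∈ 𝒰 | x ∉ U}.Finite

/-- A τ-cover: a large cover such that for all `x, y`, one of the sets
`{U : x ∈ U, y ∉ U}`, `{U : y ∈ U, x ∉ U}` is finite. -/
def IsTauCover (𝒰 : Set (Set α)) : Prop :=
  IsLargeCover 𝒰 ∧ ∀ x y : α,
    {U ∈ 𝒰 | x ∈ U ∧ y ∉ U}.Finite ∨ {U ∈ 𝒰 | y ∈ U ∧ x ∉ U}.Finite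

/-- A τ*-cover: a large, countably infinite cover which, enumerated bijectively
as `⟨Uₙ⟩`, admits for each point `y` an infinite `r y ⊆ {n | y ∈ Uₙ}` such that
the family `{r y}` is linearly quasiordered by `⊆*`. -/
def IsTauStarCover (𝒰 : Set (Set α)) : Prop :=
  IsLargeCover 𝒰 ∧
  ∃ U : ℕ → Set α, Function.Injective U ∧ Set.range U = 𝒰 ∧
    ∃ r : α → Set ℕ,
      (∀ y : α, (r y).Infinite ∧ r y ⊆ {n | y ∈ U n}) ∧
      (∀ y z : α, AlmostSubset (r y) (r z) ∨ AlmostSubset (r z) (r y))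

/-- Ω : countable open ω-covers. -/
def OpenOmega (α : Type) [TopologicalSpace α] : Set (Set (Set α)) :=
  {𝒰 | 𝒰.Countable ∧ (∀ U ∈ 𝒰, IsOpen U) ∧ IsOmegaCover 𝒰}

/-- Γ : countable open γ-covers. -/
def OpenGamma (α : Type) [TopologicalSpace α] : Set (Set (Set α)) :=
  {𝒰 | 𝒰.Countable ∧ (∀ U ∈ 𝒰, IsOpen U) ∧ IsGammaCover 𝒰}

/-- T : countable open τ-covers. -/
def OpenTau (α : Type) [TopologicalSpace α] : Set (Set (Set α)) :=
  {𝒰 | 𝒰.Countable ∧ (∀ U ∈ 𝒰, IsOpen U) ∧ IsTauCover 𝒰}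

/-- T* : countable open τ*-covers. -/
def OpenTauStar (α : Type) [TopologicalSpace α] : Set (Set (Set α)) :=
  {𝒰 | 𝒰.Countable ∧ (∀ U ∈ 𝒰, IsOpen U) ∧ IsTauStarCover 𝒰}

/-- B_Ω : countable Borel ω-covers. -/
def BorelOmega (α : Type) [MeasurableSpace α] : Set (Set (Set α)) :=
  {𝒰 | 𝒰.Countable ∧ (∀ U ∈ 𝒰, MeasurableSet U) ∧ IsOmegaCover 𝒰}

/-- B_Γ : countable Borel γ-covers. -/
def BorelGamma (α : Type) [MeasurableSpace α] : Set (Set (Set α)) :=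
  {𝒰 | 𝒰.Countable ∧ (∀ U ∈ 𝒰, MeasurableSet U) ∧ IsGammaCover 𝒰}

/-- B_T : countable Borel τ-covers. -/
def BorelTau (α : Type) [MeasurableSpace α] : Set (Set (Set α)) :=
  {𝒰 | 𝒰.Countable ∧ (∀ U ∈ 𝒰, MeasurableSet U) ∧ IsTauCover 𝒰}

/-- The selection principle S₁(𝔘,𝔙). -/
def S1 (𝔘 𝔙 : Set (Set (Set α))) : Prop :=
  ∀ 𝒰 : ℕ → Set (Set α), (∀ n, 𝒰 n ∈ 𝔘) →
    ∃ V : ℕ → Set α, (∀ n, V n ∈ 𝒰 n) ∧ Set.range V ∈ 𝔙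

/-- The selection principle Sfin(𝔘,𝔙). -/
def Sfin (𝔘 𝔙 : Set (Set (Set α))) : Prop :=
  ∀ 𝒰 : ℕ → Set (Set α), (∀ n, 𝒰 n ∈ 𝔘) →
    ∃ F : ℕ → Set (Set α), (∀ n, (F n).Finite ∧ F n ⊆ 𝒰 n) ∧ (⋃ n, F n) ∈ 𝔙

/-- The selection principle Ufin(𝔘,𝔙). -/
def Ufin (𝔘 𝔙 : Set (Set (Set α))) : Prop :=
  ∀ 𝒰 : ℕ → Set (Set α), (∀ n, 𝒰 n ∈ 𝔘) →
    (∀ n, ¬ ∃ F : Set (Set α), F ⊆ 𝒰 n ∧ F.Finite ∧ ⋃₀ F = univ) →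
    ∃ F : ℕ → Set (Set α), (∀ n, (F n).Finite ∧ F n ⊆ 𝒰 n) ∧
      Set.range (fun n => ⋃₀ (F n)) ∈ 𝔙

/-- binom(𝔘,𝔙): each member of 𝔘 contains a subfamily belonging to 𝔙. -/
def Binom (𝔘 𝔙 : Set (Set (Set α))) : Prop :=
  ∀ 𝒰 ∈ 𝔘, ∃ 𝒱 ⊆ 𝒰, 𝒱 ∈ 𝔙

/-- Borel measurability of a map into `P(ℕ)` (identified with the Cantor
space via characteristic functions): each coordinate is measurable. -/
def BorelMeasSets {β : Type} [MeasurableSpace β] (f : β → Set ℕ) : Prop :=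
  ∀ n : ℕ, MeasurableSet {x | n ∈ f x}

/-- The excluded middle property for a family `Y ⊆ ℕ^ℕ`. -/
def ExcludedMiddleProp (Y : Set (ℕ → ℕ)) : Prop :=
  ∃ g : ℕ → ℕ,
    (∀ f ∈ Y, {n | f n < g n}.Infinite) ∧
    ∀ f ∈ Y, ∀ h ∈ Y,
      {n | f n < g n ∧ g n ≤ h n}.Finite ∨ {n | h n < g n ∧ g n ≤ f n}.Finite

/-- non(J): the minimal cardinality of a set of reals not satisfying `J`. -/
noncomputable def nonCard (J : Set ℝ → Prop) : Cardinal :=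
  sInf {c : Cardinal | ∃ X : Set ℝ, ¬ J X ∧ Cardinal.mk ↥X = c}

/-- add(J): the minimal cardinality of a family of sets of reals, each
satisfying `J`, whose union does not satisfy `J`. -/
noncomputable def addCard (J : Set ℝ → Prop) : Cardinal :=
  sInf {c : Cardinal | ∃ 𝔉 : Set (Set ℝ),
    (∀ A ∈ 𝔉, J A) ∧ ¬ J (⋃₀ 𝔉) ∧ Cardinal.mk ↥𝔉 = c}

/-- 𝔱 : the minimal cardinality of a tower. -/
noncomputable def towerCard : Cardinal :=
  sInf {c : Cardinal | ∃ Y : Set (Set ℕ), IsTower Y ∧ Cardinal.mk ↥Y = c}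

lemma gammaCover_isTauCover {𝒰 : Set (Set α)} (h : IsGammaCover 𝒰) : IsTauCover 𝒰 := by
  obtain ⟨hc, hinf, hγ⟩ := h
  refine ⟨⟨hc, fun x => ?_⟩, fun x y =>
    Or.inl ((hγ y).subset (fun U hU => ⟨hU.1, hU.2.2⟩))⟩
  have hsub : 𝒰 \ {U ∈ 𝒰 | x ∉ U} ⊆ {U ∈ 𝒰 | x ∈ U} := by
    intro U hU
    exact ⟨hU.1, by_contra fun hx => hU.2 ⟨hU.1, hx⟩⟩
  exact ((hinf.diff (hγ x)).mono hsub)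

lemma exists_min_of_total {β : Type} (r : β → β → Prop)
    (htrans : ∀ a b c, r a b → r b c → r a c) :
    ∀ F : Finset β, F.Nonempty → (∀ a ∈ F, ∀ b ∈ F, r a b ∨ r b a) →
      ∃ a ∈ F, ∀ b ∈ F, r a b := by
  classical
  intro F
  induction F using Finset.induction_on with
  | empty => intro h; exact absurd h (by simp)
  | @insert a s ha ih =>
    intro _ htot
    rcases s.eq_empty_or_nonempty with rfl | hs
    · refine ⟨a, Finset.mem_insert_self a _, ?_⟩
      intro b hb
      simp only [Finset.mem_insert, Finset.notMem_empty, or_false] at hb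
      subst hb
      rcases htot b (Finset.mem_insert_self b _) b (Finset.mem_insert_self b _) with h | h <;>
        exact h
    · obtain ⟨m, hms, hmin⟩ := ih hs (fun x hx y hy =>
        htot x (Finset.mem_insert_of_mem hx) y (Finset.mem_insert_of_mem hy))
      have ham := htot a (Finset.mem_insert_self a _) m (Finset.mem_insert_of_mem hms)
      have haa : r a a := by
        rcases htot a (Finset.mem_insert_self a _) a (Finset.mem_insert_self a _) with h | h <;>
          exact h
      rcases ham with h | h
      · refine ⟨a, Finset.mem_insert_self a _, ?_⟩
        intro b hb
        rcases Finset.mem_insert.mp hb with rfl | hb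
        · exact haa
        · exact htrans a m b h (hmin b hb)
      · refine ⟨m, Finset.mem_insert_of_mem hms, ?_⟩
        intro b hb
        rcases Finset.mem_insert.mp hb with rfl | hb
        · exact h
        · exact hmin b hb

lemma tauCover_isOmegaCover [Nonempty α] {𝒰 : Set (Set α)} (h : IsTauCover 𝒰) :
    IsOmegaCover 𝒰 := by
  classical
  obtain ⟨⟨hcov, hlarge⟩, htau⟩ := h
  refine ⟨hcov, fun F hF => ?_⟩
  rcases F.eq_empty_or_nonempty with rfl | hne
  · obtain ⟨x⟩ := ‹Nonempty α›
    obtain ⟨U, hU⟩ := (hlarge x).nonempty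
    exact ⟨U, hU.1, empty_subset U⟩
  · set r : α → α → Prop := fun x y => {U ∈ 𝒰 | x ∈ U ∧ y ∉ U}.Finite with hr
    have htrans : ∀ a b c, r a b → r b c → r a c := by
      intro a b c hab hbc
      apply Set.Finite.subset (hab.union hbc)
      intro U hU
      by_cases hb : b ∈ U
      · exact Or.inr ⟨hU.1, hb, hU.2.2⟩
      · exact Or.inl ⟨hU.1, hU.2.1, hb⟩
    obtain ⟨x₀, hx₀F, hmin⟩ := exists_min_of_total r htrans hF.toFinset
      (by simpa using hne) (fun a _ b _ => htau a b)
    have hbadfin : (⋃ y ∈ hF.toFinset, {U ∈ 𝒰 | x₀ ∈ U ∧ y ∉ U}).Finite :=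
      Set.Finite.biUnion hF.toFinset.finite_toSet (fun y hy => hmin y hy)
    obtain ⟨U, hU⟩ := ((hlarge x₀).diff hbadfin).nonempty
    refine ⟨U, hU.1.1, fun y hy => ?_⟩
    by_contra hyU
    exact hU.2 (Set.mem_biUnion (hF.mem_toFinset.mpr hy) ⟨hU.1.1, hU.1.2, hyU⟩)

def IntFam (𝒰 : ℕ → Set (Set α)) : ℕ → Set (Set α)
  | 0 => 𝒰 0
  | n + 1 => Set.image2 (· ∩ ·) (IntFam 𝒰 n) (𝒰 (n + 1))

lemma intFam_countable {𝒰 : ℕ → Set (Set α)} (h : ∀ n, (𝒰 n).Countable) :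
    ∀ n, (IntFam 𝒰 n).Countable := by
  intro n
  induction n with
  | zero => exact h 0
  | succ n ih => exact Set.Countable.image2 ih (h (n + 1)) _

lemma intFam_pred {P : Set α → Prop} (hP : ∀ s t, P s → P t → P (s ∩ t))
    {𝒰 : ℕ → Set (Set α)} (h : ∀ n, ∀ U ∈ 𝒰 n, P U) :
    ∀ n, ∀ s ∈ IntFam 𝒰 n, P s := by
  intro n
  induction n with
  | zero => exact h 0
  | succ n ih =>
    rintro s ⟨t, ht, u, hu, rfl⟩
    exact hP t u (ih t ht) (h (n + 1) u hu)

lemma intFam_subset {𝒰 : ℕ → Set (Set α)} :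
    ∀ n, ∀ s ∈ IntFam 𝒰 n, ∀ i, i ≤ n → ∃ U ∈ 𝒰 i, s ⊆ U := by
  intro n
  induction n with
  | zero =>
    intro s hs i hi
    obtain rfl : i = 0 := Nat.le_zero.mp hi
    exact ⟨s, hs, subset_rfl⟩
  | succ n ih =>
    rintro s ⟨t, ht, u, hu, rfl⟩ i hi
    rcases Nat.le_succ_iff_eq_or_le.mp hi with rfl | hle
    · exact ⟨u, hu, Set.inter_subset_right⟩
    · obtain ⟨U, hU, hsub⟩ := ih t ht i hle
      exact ⟨U, hU, Set.inter_subset_left.trans hsub⟩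

lemma intFam_exists_superset [Nonempty α] {𝒰 : ℕ → Set (Set α)}
    (h : ∀ n, IsOmegaCover (𝒰 n)) :
    ∀ n, ∀ F : Set α, F.Finite → ∃ s ∈ IntFam 𝒰 n, F ⊆ s := by
  intro n
  induction n with
  | zero => exact (h 0).2
  | succ n ih =>
    intro F hF
    obtain ⟨t, ht, htF⟩ := ih F hF
    obtain ⟨u, hu, huF⟩ := (h (n + 1)).2 F hF
    exact ⟨t ∩ u, Set.mem_image2_of_mem ht hu, Set.subset_inter htF huF⟩

lemma intFam_ne_univ {𝒰 : ℕ → Set (Set α)} (h : ∀ n, IsOmegaCover (𝒰 n)) :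
    ∀ n, ∀ s ∈ IntFam 𝒰 n, s ≠ univ := by
  intro n s hs hequ
  obtain ⟨U, hU, hsub⟩ := intFam_subset n s hs 0 (Nat.zero_le n)
  have : U = univ := Set.eq_univ_of_univ_subset (hequ ▸ hsub)
  exact (h 0).1.2 (this ▸ hU)

lemma intFam_isOmegaCover [Nonempty α] {𝒰 : ℕ → Set (Set α)}
    (h : ∀ n, IsOmegaCover (𝒰 n)) (n : ℕ) : IsOmegaCover (IntFam 𝒰 n) := by
  refine ⟨⟨?_, fun hu => intFam_ne_univ h n univ hu rfl⟩, intFam_exists_superset h n⟩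
  apply Set.eq_univ_of_forall
  intro x
  obtain ⟨s, hs, hxs⟩ := intFam_exists_superset h n {x} (Set.finite_singleton x)
  exact ⟨s, hs, hxs rfl⟩

theorem main_iff [Nonempty α] (P : Set α → Prop) (hPi : ∀ s t, P s → P t → P (s ∩ t)) :
    S1 {𝒰 : Set (Set α) | 𝒰.Countable ∧ (∀ U ∈ 𝒰, P U) ∧ IsOmegaCover 𝒰}
       {𝒰 : Set (Set α) | 𝒰.Countable ∧ (∀ U ∈ 𝒰, P U) ∧ IsGammaCover 𝒰} ↔
    Binom {𝒰 : Set (Set α) | 𝒰.Countable ∧ (∀ U ∈ 𝒰, P U) ∧ IsTauCover 𝒰}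
          {𝒰 : Set (Set α) | 𝒰.Countable ∧ (∀ U ∈ 𝒰, P U) ∧ IsGammaCover 𝒰} ∧
    Sfin {𝒰 : Set (Set α) | 𝒰.Countable ∧ (∀ U ∈ 𝒰, P U) ∧ IsOmegaCover 𝒰}
         {𝒰 : Set (Set α) | 𝒰.Countable ∧ (∀ U ∈ 𝒰, P U) ∧ IsTauCover 𝒰} := by
  classical
  constructor
  · intro hS1
    constructor
    · rintro 𝒰 ⟨hc, hP, hτ⟩
      obtain ⟨V, hV, hVΓ⟩ := hS1 (fun _ => 𝒰) (fun _ => ⟨hc, hP, tauCover_isOmegaCover hτ⟩)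
      exact ⟨Set.range V, Set.range_subset_iff.mpr hV, hVΓ⟩
    · intro 𝒰 h𝒰
      obtain ⟨V, hV, hc, hP, hγ⟩ := hS1 𝒰 h𝒰
      refine ⟨fun n => {V n}, fun n =>
        ⟨Set.finite_singleton _, Set.singleton_subset_iff.mpr (hV n)⟩, ?_⟩
      rw [Set.iUnion_singleton_eq_range]
      exact ⟨hc, hP, gammaCover_isTauCover hγ⟩
  · rintro ⟨hbin, hsf⟩ 𝒰 h𝒰
    have hIF : ∀ n, IntFam 𝒰 n ∈
        {𝒰 : Set (Set α) | 𝒰.Countable ∧ (∀ U ∈ 𝒰, P U) ∧ IsOmegaCover 𝒰} :=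
      fun n => ⟨intFam_countable (fun k => (h𝒰 k).1) n,
        intFam_pred hPi (fun k => (h𝒰 k).2.1) n,
        intFam_isOmegaCover (fun k => (h𝒰 k).2.2) n⟩
    obtain ⟨F', hF', hWmem⟩ := hsf (IntFam 𝒰) hIF
    obtain ⟨𝒱, h𝒱W, h𝒱c, h𝒱P, h𝒱γ⟩ := hbin _ hWmem
    have h𝒱inf : 𝒱.Infinite := h𝒱γ.2.1
    have hmemW : ∀ V ∈ 𝒱, ∃ n, V ∈ F' n := fun V hV => Set.mem_iUnion.mp (h𝒱W hV)
    choose! nn hnn using hmemW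
    have key : ∀ N : ℕ, ∃ V, V ∈ 𝒱 ∧ N < nn V := by
      intro N
      have hfin : (⋃ n ∈ Finset.range (N + 1), F' n).Finite :=
        Set.Finite.biUnion (Finset.range (N + 1)).finite_toSet (fun n _ => (hF' n).1)
      obtain ⟨V, hV𝒱, hVnot⟩ := (h𝒱inf.diff hfin).nonempty
      refine ⟨V, hV𝒱, ?_⟩
      by_contra hle
      push_neg at hle
      exact hVnot (Set.mem_biUnion (Finset.mem_range.mpr (Nat.lt_succ_of_le hle))
        (hnn V hV𝒱))
    obtain ⟨g, hg𝒱, hgmono⟩ : ∃ g : ℕ → Set α,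
        (∀ j, g j ∈ 𝒱) ∧ (∀ j, nn (g j) < nn (g (j + 1))) := by
      choose f hf1 hf2 using key
      refine ⟨fun j => Nat.rec (f 0) (fun _ prev => f (nn prev)) j, fun j => ?_, fun j => ?_⟩
      · cases j with
        | zero => exact hf1 0
        | succ j => exact hf1 _
      · exact hf2 _
    have hmsm : StrictMono (fun j => nn (g j)) := strictMono_nat_of_lt_succ hgmono
    have hex : ∀ n : ℕ, ∃ j, n ≤ nn (g j) := fun n => ⟨n, hmsm.le_apply⟩
    have hjn : ∀ n, n ≤ nn (g (Nat.find (hex n))) := fun n => Nat.find_spec (hex n)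
    have hcomp : ∀ n, ∃ U, U ∈ 𝒰 n ∧ g (Nat.find (hex n)) ⊆ U := by
      intro n
      have h1 : g (Nat.find (hex n)) ∈ IntFam 𝒰 (nn (g (Nat.find (hex n)))) :=
        (hF' _).2 (hnn _ (hg𝒱 _))
      obtain ⟨U, hU, hsub⟩ := intFam_subset _ _ h1 n (hjn n)
      exact ⟨U, hU, hsub⟩
    choose Vs hVs𝒰 hVssub using hcomp
    have hginj : Function.Injective g := fun a b hab =>
      hmsm.injective (show nn (g a) = nn (g b) by rw [hab])
    have hev : ∀ x : α, ∃ N, ∀ n, N ≤ n → x ∈ Vs n := by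
      intro x
      have hjfin : {j | x ∉ g j}.Finite := by
        have hsub : {j | x ∉ g j} ⊆ g ⁻¹' {V ∈ 𝒱 | x ∉ V} :=
          fun j hj => ⟨hg𝒱 j, hj⟩
        exact ((h𝒱γ.2.2 x).preimage hginj.injOn).subset hsub
      obtain ⟨J, hJ⟩ := hjfin.bddAbove
      refine ⟨nn (g (J + 1)), fun n hn => ?_⟩
      have hjng : J < Nat.find (hex n) := by
        by_contra hle
        push_neg at hle
        have h1 : nn (g (Nat.find (hex n))) < nn (g (J + 1)) :=
          hmsm (Nat.lt_succ_of_le hle)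
        have h2 := hjn n
        omega
      have hx : x ∈ g (Nat.find (hex n)) := by
        by_contra hxn
        exact absurd (hJ hxn) (by omega)
      exact hVssub n hx
    refine ⟨Vs, hVs𝒰, Set.countable_range Vs, ?_, ⟨?_, ?_⟩, ?_, ?_⟩
    · rintro U ⟨n, rfl⟩
      exact (h𝒰 n).2.1 _ (hVs𝒰 n)
    · apply Set.eq_univ_of_forall
      intro x
      obtain ⟨N, hN⟩ := hev x
      exact ⟨Vs N, ⟨N, rfl⟩, hN N le_rfl⟩
    · rintro ⟨n, hn⟩
      exact (h𝒰 n).2.2.1.2 (hn ▸ hVs𝒰 n)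
    · by_contra hinf
      have hfin := Set.not_infinite.mp hinf
      have hfiber : ∃ W ∈ Set.range Vs, {n | Vs n = W}.Infinite := by
        by_contra hall
        push_neg at hall
        have hsub : (Set.univ : Set ℕ) ⊆ ⋃ W ∈ Set.range Vs, {n | Vs n = W} :=
          fun n _ => Set.mem_biUnion ⟨n, rfl⟩ rfl
        exact Set.infinite_univ
          ((Set.Finite.biUnion hfin (fun W hW => (hall W hW))).subset hsub)
      obtain ⟨W, hWr, hWinf⟩ := hfiber
      have hWuniv : W = Set.univ := by
        apply Set.eq_univ_of_forall
        intro x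
        obtain ⟨N, hN⟩ := hev x
        obtain ⟨n, hn1, hn2⟩ := hWinf.exists_gt N
        exact hn1 ▸ hN n (le_of_lt hn2)
      obtain ⟨n, rfl⟩ := hWr
      exact (h𝒰 n).2.2.1.2 (hWuniv ▸ hVs𝒰 n)
    · intro x
      obtain ⟨N, hN⟩ := hev x
      have hsub : {U ∈ Set.range Vs | x ∉ U} ⊆ Vs '' (Set.Iio N) := by
        rintro U ⟨⟨n, rfl⟩, hxU⟩
        refine ⟨n, ?_, rfl⟩
        by_contra hge
        simp only [Set.mem_Iio, not_lt] at hge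
        exact hxU (hN n (by simpa using hge))
      exact ((Set.finite_Iio N).image Vs).subset hsub

/-- `S₁(Ω,Γ) = binom(T,Γ) ∩ Sfin(Ω,T)`, and the Borel analogue. -/
theorem statement4 (X : Set ℝ) (hX : X.Infinite) :
    (S1 (OpenOmega ↥X) (OpenGamma ↥X) ↔
      Binom (OpenTau ↥X) (OpenGamma ↥X) ∧ Sfin (OpenOmega ↥X) (OpenTau ↥X)) ∧
    (S1 (BorelOmega ↥X) (BorelGamma ↥X) ↔
      Binom (BorelTau ↥X) (BorelGamma ↥X) ∧ Sfin (BorelOmega ↥X) (BorelTau ↥X)) := by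
  have : Nonempty ↥X := hX.nonempty.to_subtype
  exact ⟨main_iff IsOpen (fun s t hs ht => hs.inter ht),
         main_iff MeasurableSet (fun s t hs ht => hs.inter ht)⟩

end TauCoverPaper
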